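/- Let X = P^1 with three marked points, and for e ∈ I = {(0,0,0),(0,1,1),(1,0,1),(1,1,0)} and α ∈ W = (0,1/2)^3 define β_i(α,e) = e_i + (-1)^{e_i}α_i and the chambers C_e = {α : Σβ_i(α,e) > 1 + |e|/2}, C_0 = {α : Σβ_i(α,e) < 1 + |e|/2 for all e ∈ I}. Then the chambers C_0 and C_e (e ∈ I) are pairwise disjoint, and their union together with the four hyperplanes H_e = {α : Σβ_i(α,e) = 1 + |e|/2} covers W. -/
import Mathlib


/-- For P¹ with 3 marked points: the five chambers C₀, C_e (e ∈ I) are pairwise disjoint,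
and together with the four walls H_e they cover the weight space W = (0,1/2)³. -/
theorem stmt_17 (α : Fin 3 → ℝ) (hα : ∀ i, 0 < α i ∧ α i < 1/2) :
    (∀ e ∈ ({![0,0,0], ![0,1,1], ![1,0,1], ![1,1,0]} : Finset (Fin 3 → ℕ)),
      ∀ e' ∈ ({![0,0,0], ![0,1,1], ![1,0,1], ![1,1,0]} : Finset (Fin 3 → ℕ)), e ≠ e' →
        ¬(1 + (∑ i, (e i : ℝ)) / 2 < ∑ i, ((e i : ℝ) + (-1 : ℝ) ^ (e i) * α i) ∧
          1 + (∑ i, (e' i : ℝ)) / 2 < ∑ i, ((e' i : ℝ) + (-1 : ℝ) ^ (e' i) * α i))) ∧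
    (∀ e ∈ ({![0,0,0], ![0,1,1], ![1,0,1], ![1,1,0]} : Finset (Fin 3 → ℕ)),
      ¬((∀ f ∈ ({![0,0,0], ![0,1,1], ![1,0,1], ![1,1,0]} : Finset (Fin 3 → ℕ)),
            ∑ i, ((f i : ℝ) + (-1 : ℝ) ^ (f i) * α i) < 1 + (∑ i, (f i : ℝ)) / 2) ∧
        1 + (∑ i, (e i : ℝ)) / 2 < ∑ i, ((e i : ℝ) + (-1 : ℝ) ^ (e i) * α i))) ∧
    ((∀ f ∈ ({![0,0,0], ![0,1,1], ![1,0,1], ![1,1,0]} : Finset (Fin 3 → ℕ)),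
        ∑ i, ((f i : ℝ) + (-1 : ℝ) ^ (f i) * α i) < 1 + (∑ i, (f i : ℝ)) / 2) ∨
      (∃ e ∈ ({![0,0,0], ![0,1,1], ![1,0,1], ![1,1,0]} : Finset (Fin 3 → ℕ)),
        1 + (∑ i, (e i : ℝ)) / 2 < ∑ i, ((e i : ℝ) + (-1 : ℝ) ^ (e i) * α i)) ∨
      (∃ e ∈ ({![0,0,0], ![0,1,1], ![1,0,1], ![1,1,0]} : Finset (Fin 3 → ℕ)),
        ∑ i, ((e i : ℝ) + (-1 : ℝ) ^ (e i) * α i) = 1 + (∑ i, (e i : ℝ)) / 2)) := by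
  obtain ⟨ha0, ha1⟩ := hα 0
  obtain ⟨hb0, hb1⟩ := hα 1
  obtain ⟨hc0, hc1⟩ := hα 2
  refine ⟨?_, ?_, ?_⟩
  · intro e he e' he' hne
    fin_cases he <;> fin_cases he' <;>
      simp_all [Fin.sum_univ_three] <;>
      · intro h1
        linarith [(hα 0).1, (hα 0).2, (hα 1).1, (hα 1).2, (hα 2).1, (hα 2).2]
  · intro e he ⟨hall, hgt⟩
    exact absurd (hall e he) (by linarith)
  · by_cases hall : ∀ f ∈ ({![0,0,0], ![0,1,1], ![1,0,1], ![1,1,0]} : Finset (Fin 3 → ℕ)),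
        ∑ i, ((f i : ℝ) + (-1 : ℝ) ^ (f i) * α i) < 1 + (∑ i, (f i : ℝ)) / 2
    · exact Or.inl hall
    · push_neg at hall
      obtain ⟨f, hf, hge⟩ := hall
      rcases lt_or_eq_of_le hge with h | h
      · exact Or.inr (Or.inl ⟨f, hf, h⟩)
      · exact Or.inr (Or.inr ⟨f, hf, h.symm⟩)
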